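/- The map γ₂: H → A₂ defined by γ₂(D̃^p t^m n^r) = (-1)^p q^p D^p c^m d^r is convolution invertible, with convolution inverse γ̄₂(D̃^p t^m n^r) = (-1)^p q^{-p + r(r-1)} d^r c^{-m} D^{-r-p}. -/

import Mathlib

open TensorProduct

variable {k A H : Type*} [Field k] [Ring A] [Algebra k A] [Ring H] [Bialgebra k H]

/-- The convolution product of two linear maps `H → A`. -/
noncomputable def conv (f g : H →ₗ[k] A) : H →ₗ[k] A :=
  (LinearMap.mul' k A) ∘ₗ (TensorProduct.map f g) ∘ₗ (Coalgebra.comul (R := k) (A := H))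

/-- The cleaving map `γ₂ : H → A₂` defined on the basis `{D̃^p t^m n^r}` of
`H = Õ_q(GL(2))/(c)` by `γ₂(D̃^p t^m n^r) = (-1)^p q^p D^p c^m d^r`. -/
noncomputable def gammaTwo (q : kˣ) (d : A) (cu Du : Aˣ)
    (bH : Module.Basis (ℤ × ℤ × ℕ) k H) : H →ₗ[k] A :=
  bH.constr k fun pmr =>
    ((((-q) ^ pmr.1 : kˣ) : k)) •
      (((Du ^ pmr.1 : Aˣ) : A) * ((cu ^ pmr.2.1 : Aˣ) : A) * d ^ pmr.2.2)

/-- The map `γ̄₂ : H → A₂` defined on the basis `{D̃^p t^m n^r}` by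
`γ̄₂(D̃^p t^m n^r) = (-1)^p q^{-p + r(r-1)} d^r c^{-m} D^{-r-p}`. -/
noncomputable def gammaTwoBar (q : kˣ) (d : A) (cu Du : Aˣ)
    (bH : Module.Basis (ℤ × ℤ × ℕ) k H) : H →ₗ[k] A :=
  bH.constr k fun pmr =>
    ((((-1 : kˣ) ^ pmr.1 * q ^ (-pmr.1 + ((pmr.2.2 * (pmr.2.2 - 1) : ℕ) : ℤ)) : kˣ) : k)) •
      (d ^ pmr.2.2 * ((cu ^ (-pmr.2.1) : Aˣ) : A) *
        ((Du ^ (-(pmr.2.2 : ℤ) - pmr.1) : Aˣ) : A))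


section AuxConj

variable {k A : Type*} [Field k] [Ring A] [Algebra k A]

lemma qconj_zpow (u : Aˣ) (x : A) (μ : kˣ) (h : (u : A) * x = (μ : k) • (x * u)) :
    ∀ a : ℤ, ((u ^ a : Aˣ) : A) * x = ((μ ^ a : kˣ) : k) • (x * ((u ^ a : Aˣ) : A)) := by
  have hinv : ((u⁻¹ : Aˣ) : A) * x = ((μ⁻¹ : kˣ) : k) • (x * ((u⁻¹ : Aˣ) : A)) := by
    have h1 : x * ((u⁻¹ : Aˣ) : A) = (μ : k) • (((u⁻¹ : Aˣ) : A) * x) := by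
      calc x * ((u⁻¹ : Aˣ) : A)
          = ((u⁻¹ : Aˣ) : A) * (((u : A) * x) * ((u⁻¹ : Aˣ) : A)) := by
            rw [← mul_assoc, ← mul_assoc, Units.inv_mul, one_mul]
        _ = ((u⁻¹ : Aˣ) : A) * (((μ : k) • (x * u)) * ((u⁻¹ : Aˣ) : A)) := by rw [h]
        _ = (μ : k) • (((u⁻¹ : Aˣ) : A) * x) := by
            rw [smul_mul_assoc, mul_smul_comm, mul_assoc, Units.mul_inv, mul_one]
    rw [h1, smul_smul, ← Units.val_mul, inv_mul_cancel, Units.val_one, one_smul]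
  intro a
  induction a using Int.induction_on with
  | zero => simp
  | succ i ih =>
      have hu : ((u ^ ((i : ℤ) + 1) : Aˣ) : A) = ((u ^ (i : ℤ) : Aˣ) : A) * u := by
        rw [zpow_add_one]; rfl
      have hμ : ((μ ^ ((i : ℤ) + 1) : kˣ) : k) = ((μ ^ (i : ℤ) : kˣ) : k) * μ := by
        rw [zpow_add_one]; rfl
      calc ((u ^ ((i : ℤ) + 1) : Aˣ) : A) * x
          = ((u ^ (i : ℤ) : Aˣ) : A) * ((u : A) * x) := by rw [hu, mul_assoc]
        _ = (μ : k) • (((u ^ (i : ℤ) : Aˣ) : A) * x * (u : A)) := by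
            rw [h, mul_smul_comm, mul_assoc]
        _ = (μ : k) • ((((μ ^ (i : ℤ) : kˣ) : k) • (x * ((u ^ (i : ℤ) : Aˣ) : A))) * (u : A)) := by
            rw [ih]
        _ = (((μ ^ (i : ℤ) : kˣ) : k) * (μ : k)) • (x * ((u ^ ((i : ℤ) + 1) : Aˣ) : A)) := by
            rw [smul_mul_assoc, smul_smul, hu, mul_assoc, mul_comm (μ : k)]
        _ = ((μ ^ ((i : ℤ) + 1) : kˣ) : k) • (x * ((u ^ ((i : ℤ) + 1) : Aˣ) : A)) := by rw [hμ]
  | pred i ih =>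
      have hu : ((u ^ (-(i : ℤ) - 1) : Aˣ) : A) = ((u ^ (-(i : ℤ)) : Aˣ) : A) * ((u⁻¹ : Aˣ) : A) := by
        rw [zpow_sub_one]; rfl
      have hμ : ((μ ^ (-(i : ℤ) - 1) : kˣ) : k) = ((μ ^ (-(i : ℤ)) : kˣ) : k) * ((μ⁻¹ : kˣ) : k) := by
        rw [zpow_sub_one]; rfl
      calc ((u ^ (-(i : ℤ) - 1) : Aˣ) : A) * x
          = ((u ^ (-(i : ℤ)) : Aˣ) : A) * (((u⁻¹ : Aˣ) : A) * x) := by rw [hu, mul_assoc]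
        _ = ((μ⁻¹ : kˣ) : k) • (((u ^ (-(i : ℤ)) : Aˣ) : A) * x * ((u⁻¹ : Aˣ) : A)) := by
            rw [hinv, mul_smul_comm, mul_assoc]
        _ = ((μ⁻¹ : kˣ) : k) • ((((μ ^ (-(i : ℤ)) : kˣ) : k) • (x * ((u ^ (-(i : ℤ)) : Aˣ) : A))) * ((u⁻¹ : Aˣ) : A)) := by
            rw [ih]
        _ = (((μ ^ (-(i : ℤ)) : kˣ) : k) * ((μ⁻¹ : kˣ) : k)) • (x * ((u ^ (-(i : ℤ) - 1) : Aˣ) : A)) := by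
            rw [smul_mul_assoc, smul_smul, hu, mul_assoc, mul_comm ((μ⁻¹ : kˣ) : k)]
        _ = ((μ ^ (-(i : ℤ) - 1) : kˣ) : k) • (x * ((u ^ (-(i : ℤ) - 1) : Aˣ) : A)) := by rw [hμ]

lemma qelem_pow_smul (v x : A) (ν : k) (h : v * x = ν • (x * v)) :
    ∀ b : ℕ, v * x ^ b = ν ^ b • (x ^ b * v) := by
  intro b
  induction b with
  | zero => simp
  | succ b ih =>
      rw [pow_succ, pow_succ, ← mul_assoc, ih, smul_mul_assoc, mul_assoc, h, mul_smul_comm,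
        smul_smul, ← mul_assoc]

lemma qconj_zpow_pow (u : Aˣ) (x : A) (μ : kˣ) (h : (u : A) * x = (μ : k) • (x * u)) (a : ℤ) (b : ℕ) :
    ((u ^ a : Aˣ) : A) * x ^ b = (((μ ^ a) ^ b : kˣ) : k) • (x ^ b * ((u ^ a : Aˣ) : A)) := by
  have := qelem_pow_smul ((u ^ a : Aˣ) : A) x (((μ ^ a : kˣ)) : k) (qconj_zpow u x μ h a) b
  rw [this, ← Units.val_pow_eq_pow_val]

lemma qconj_zpow_zpow (u v : Aˣ) (μ : kˣ) (h : (u : A) * v = (μ : k) • ((v : A) * u)) (a b : ℤ) :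
    ((u ^ a : Aˣ) : A) * ((v ^ b : Aˣ) : A)
      = ((μ ^ (a * b) : kˣ) : k) • (((v ^ b : Aˣ) : A) * ((u ^ a : Aˣ) : A)) := by
  have h1 := qconj_zpow u (v : A) μ h a
  have h2 : (v : A) * ((u ^ a : Aˣ) : A) = (((μ ^ a)⁻¹ : kˣ) : k) • (((u ^ a : Aˣ) : A) * v) := by
    rw [h1, smul_smul, ← Units.val_mul ((μ ^ a)⁻¹) (μ ^ a), inv_mul_cancel, Units.val_one, one_smul]
  have h3 := qconj_zpow v ((u ^ a : Aˣ) : A) ((μ ^ a)⁻¹) h2 b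
  calc ((u ^ a : Aˣ) : A) * ((v ^ b : Aˣ) : A)
      = ((((μ ^ a) ^ b : kˣ)) : k) • (((((μ ^ a)⁻¹ ^ b : kˣ)) : k) • (((u ^ a : Aˣ) : A) * ((v ^ b : Aˣ) : A))) := by
        rw [smul_smul, ← Units.val_mul ((μ ^ a) ^ b) ((μ ^ a)⁻¹ ^ b), ← mul_zpow, mul_inv_cancel, one_zpow, Units.val_one, one_smul]
    _ = ((μ ^ (a * b) : kˣ) : k) • (((v ^ b : Aˣ) : A) * ((u ^ a : Aˣ) : A)) := by
        rw [← h3, zpow_mul]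

end AuxConj
section NFsec

variable {k A : Type*} [Field k] [Ring A] [Algebra k A]
variable (q : kˣ) (d : A) (cu Du : Aˣ)

/-- normal form `Du^x cu^y d^z` -/
noncomputable def NF (x y : ℤ) (z : ℕ) : A := ((Du ^ x : Aˣ) : A) * ((cu ^ y : Aˣ) : A) * d ^ z

variable (hcd : (cu : A) * d = ((q⁻¹ : kˣ) : k) • (d * (cu : A)))
  (hcD : (cu : A) * (Du : A) = (((q ^ 2)⁻¹ : kˣ) : k) • ((Du : A) * (cu : A)))
  (hdD : d * (Du : A) = (Du : A) * d)

section helpers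
include hcd in
lemma cu_pow_d (a : ℤ) (b : ℕ) :
    ((cu ^ a : Aˣ) : A) * d ^ b = ((q ^ (-(a * (b : ℤ))) : kˣ) : k) • (d ^ b * ((cu ^ a : Aˣ) : A)) := by
  have h := qconj_zpow_pow cu d q⁻¹ hcd a b
  rw [h]
  congr 1
  norm_cast
  rw [← zpow_natCast ((q⁻¹ : kˣ) ^ a) b, ← zpow_mul, inv_zpow, ← zpow_neg]

include hcd in
lemma d_pow_cu (a : ℤ) (b : ℕ) :
    d ^ b * ((cu ^ a : Aˣ) : A) = ((q ^ (a * (b : ℤ)) : kˣ) : k) • (((cu ^ a : Aˣ) : A) * d ^ b) := by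
  rw [cu_pow_d q d cu hcd a b, smul_smul, ← Units.val_mul (q ^ (a * (b:ℤ))) (q ^ (-(a * (b:ℤ)))),
    ← zpow_add, add_neg_cancel, zpow_zero, Units.val_one, one_smul]

include hcD in
lemma cu_zpow_Du (a b : ℤ) :
    ((cu ^ a : Aˣ) : A) * ((Du ^ b : Aˣ) : A)
      = ((q ^ (-(2 * a * b)) : kˣ) : k) • (((Du ^ b : Aˣ) : A) * ((cu ^ a : Aˣ) : A)) := by
  have h := qconj_zpow_zpow cu Du ((q ^ 2)⁻¹) hcD a b
  rw [h]
  congr 1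
  norm_cast
  rw [inv_zpow, ← zpow_neg, pow_two, mul_zpow, ← zpow_add]
  congr 1
  ring

include hdD in
lemma Du_zpow_d (a : ℤ) (b : ℕ) :
    ((Du ^ a : Aˣ) : A) * d ^ b = d ^ b * ((Du ^ a : Aˣ) : A) := by
  have h : Commute d ((Du : A)) := hdD
  exact ((h.units_zpow_right a).pow_left b).symm.eq

end helpers

include hcd hcD hdD in
lemma NF_mul (x y x' y' : ℤ) (z z' : ℕ) :
    NF (d := d) (cu := cu) (Du := Du) x y z * NF (d := d) (cu := cu) (Du := Du) x' y' z'
      = ((q ^ (y' * (z : ℤ) - 2 * y * x') : kˣ) : k) •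
          NF (d := d) (cu := cu) (Du := Du) (x + x') (y + y') (z + z') := by
  have swap1 : ∀ w : A, d ^ z * (((Du ^ x' : Aˣ) : A) * w) = ((Du ^ x' : Aˣ) : A) * (d ^ z * w) := by
    intro w; rw [← mul_assoc, ← Du_zpow_d d Du hdD, mul_assoc]
  have swap2 : ∀ w : A, ((cu ^ y : Aˣ) : A) * (((Du ^ x' : Aˣ) : A) * w)
      = ((q ^ (-(2 * y * x')) : kˣ) : k) • (((Du ^ x' : Aˣ) : A) * (((cu ^ y : Aˣ) : A) * w)) := by
    intro w
    rw [← mul_assoc, cu_zpow_Du q cu Du hcD, smul_mul_assoc, mul_assoc ((Du ^ x' : Aˣ) : A)]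
  have swap3 : ∀ w : A, d ^ z * (((cu ^ y' : Aˣ) : A) * w)
      = ((q ^ (y' * (z : ℤ)) : kˣ) : k) • (((cu ^ y' : Aˣ) : A) * (d ^ z * w)) := by
    intro w
    rw [← mul_assoc, d_pow_cu q d cu hcd, smul_mul_assoc, mul_assoc ((cu ^ y' : Aˣ) : A)]
  show (((Du ^ x : Aˣ) : A) * ((cu ^ y : Aˣ) : A) * d ^ z) *
      (((Du ^ x' : Aˣ) : A) * ((cu ^ y' : Aˣ) : A) * d ^ z') = _
  calc (((Du ^ x : Aˣ) : A) * ((cu ^ y : Aˣ) : A) * d ^ z) *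
      (((Du ^ x' : Aˣ) : A) * ((cu ^ y' : Aˣ) : A) * d ^ z')
      = ((Du ^ x : Aˣ) : A) * (((cu ^ y : Aˣ) : A) * (d ^ z * (((Du ^ x' : Aˣ) : A) *
          (((cu ^ y' : Aˣ) : A) * d ^ z')))) := by
        simp only [mul_assoc]
    _ = ((Du ^ x : Aˣ) : A) * (((cu ^ y : Aˣ) : A) * (((Du ^ x' : Aˣ) : A) * (d ^ z *
          (((cu ^ y' : Aˣ) : A) * d ^ z')))) := by rw [swap1]
    _ = ((q ^ (y' * (z : ℤ)) : kˣ) : k) • (((Du ^ x : Aˣ) : A) * (((cu ^ y : Aˣ) : A) *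
          (((Du ^ x' : Aˣ) : A) * (((cu ^ y' : Aˣ) : A) * (d ^ z * d ^ z'))))) := by
        rw [swap3]; simp only [mul_smul_comm]
    _ = ((q ^ (y' * (z : ℤ)) : kˣ) : k) • (((q ^ (-(2 * y * x')) : kˣ) : k) •
          (((Du ^ x : Aˣ) : A) * (((Du ^ x' : Aˣ) : A) * (((cu ^ y : Aˣ) : A) *
          (((cu ^ y' : Aˣ) : A) * (d ^ z * d ^ z')))))) := by
        rw [swap2]; simp only [mul_smul_comm]
    _ = ((q ^ (y' * (z : ℤ) - 2 * y * x') : kˣ) : k) •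
          NF (d := d) (cu := cu) (Du := Du) (x + x') (y + y') (z + z') := by
        rw [smul_smul, ← Units.val_mul (q ^ (y' * (z:ℤ))) (q ^ (-(2 * y * x'))), ← zpow_add]
        have he : y' * (z : ℤ) + -(2 * y * x') = y' * (z : ℤ) - 2 * y * x' := by ring
        rw [he]
        congr 1
        show _ = ((Du ^ (x + x') : Aˣ) : A) * ((cu ^ (y + y') : Aˣ) : A) * d ^ (z + z')
        rw [zpow_add Du, zpow_add cu, pow_add, Units.val_mul, Units.val_mul]
        simp only [mul_assoc]

include hcd hcD hdD in
lemma NF_of_rev (x y : ℤ) (z : ℕ) :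
    d ^ z * ((cu ^ y : Aˣ) : A) * ((Du ^ x : Aˣ) : A)
      = ((q ^ (y * (z : ℤ) - 2 * y * x) : kˣ) : k) • NF (d := d) (cu := cu) (Du := Du) x y z := by
  calc d ^ z * ((cu ^ y : Aˣ) : A) * ((Du ^ x : Aˣ) : A)
      = ((q ^ (y * (z : ℤ)) : kˣ) : k) • (((cu ^ y : Aˣ) : A) * (d ^ z * ((Du ^ x : Aˣ) : A))) := by
        rw [d_pow_cu q d cu hcd, smul_mul_assoc, mul_assoc]
    _ = ((q ^ (y * (z : ℤ)) : kˣ) : k) • (((cu ^ y : Aˣ) : A) * ((Du ^ x : Aˣ) : A) * d ^ z) := by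
        rw [← Du_zpow_d d Du hdD, ← mul_assoc]
    _ = ((q ^ (y * (z : ℤ)) : kˣ) : k) • (((q ^ (-(2 * y * x)) : kˣ) : k) •
          (((Du ^ x : Aˣ) : A) * ((cu ^ y : Aˣ) : A) * d ^ z)) := by
        rw [cu_zpow_Du q cu Du hcD, smul_mul_assoc]
    _ = ((q ^ (y * (z : ℤ) - 2 * y * x) : kˣ) : k) • NF (d := d) (cu := cu) (Du := Du) x y z := by
        rw [smul_smul, ← Units.val_mul (q ^ (y * (z:ℤ))) (q ^ (-(2 * y * x))), ← zpow_add]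
        have he : y * (z : ℤ) + -(2 * y * x) = y * (z : ℤ) - 2 * y * x := by ring
        rw [he]
        rfl

end NFsec
section Phase1

open TensorProduct Coalgebra

variable {k H : Type*} [Field k] [Ring H] [Bialgebra k H]

lemma t_Dt_comm (q : kˣ) (t Dt : Hˣ) (n : H)
    (bH : Module.Basis (ℤ × ℤ × ℕ) k H)
    (hbH : ∀ (p m : ℤ) (r : ℕ),
      bH (p, m, r) = ((Dt ^ p : Hˣ) : H) * ((t ^ m : Hˣ) : H) * n ^ r)
    (hgt : ∀ m : ℤ, Coalgebra.comul (R := k) ((t ^ m : Hˣ) : H) =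
      ((t ^ m : Hˣ) : H) ⊗ₜ[k] ((t ^ m : Hˣ) : H))
    (hgD : ∀ p : ℤ, Coalgebra.comul (R := k) ((Dt ^ p : Hˣ) : H) =
      ((Dt ^ p : Hˣ) : H) ⊗ₜ[k] ((Dt ^ p : Hˣ) : H))
    (hΔnr : ∀ r : ℕ, Coalgebra.comul (R := k) (n ^ r) =
      ∑ j ∈ Finset.range (r + 1),
        ((r.choose j : k) * ((q ^ (j * (r - j)) : kˣ) : k)) •
          ((((t ^ j : Hˣ) : H) * n ^ (r - j)) ⊗ₜ[k]
            (((Dt ^ (r - j) : Hˣ) : H) * ((t ^ ((j : ℤ) - (r : ℤ)) : Hˣ) : H) * n ^ j))) :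
    (t : Hˣ) * Dt = Dt * t := by
  -- abbreviations (chosen to match `norm_num` normal forms)
  set wv : H := (Dt : H) * ((t⁻¹ : Hˣ) : H) with hwv
  set W : H := ((Dt : H)) ^ 2 * (((t ^ 2)⁻¹ : Hˣ) : H) with hW
  set En : H := wv * n with hEn
  -- basis values
  have hb002 : bH (0, 0, 2) = n ^ 2 := by rw [hbH]; simp
  have hb011 : bH (0, 1, 1) = (t : H) * n := by rw [hbH]; simp
  have hb020 : bH (0, 2, 0) = ((t : H)) ^ 2 := by rw [hbH]; simp [zpow_ofNat, Units.val_pow_eq_pow_val]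
  have hb100 : bH (1, 0, 0) = (Dt : H) := by rw [hbH]; simp
  have hb1m11 : bH (1, -1, 1) = En := by rw [hbH, hEn, hwv]; simp
  have hb2m20 : bH (2, -2, 0) = W := by rw [hbH, hW]; simp [zpow_neg, zpow_ofNat, Units.val_pow_eq_pow_val]
  -- coordinates of basis vectors
  have hco1 : ∀ (i : ℤ × ℤ × ℕ), bH.coord i (bH i) = 1 := by
    intro i
    rw [Module.Basis.coord_apply, Module.Basis.repr_self, Finsupp.single_eq_same]
  have hco0 : ∀ (i j : ℤ × ℤ × ℕ), j ≠ i → bH.coord i (bH j) = 0 := by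
    intro i j hij
    rw [Module.Basis.coord_apply, Module.Basis.repr_self, Finsupp.single_eq_of_ne' hij]
  -- comul of n
  have hn1 : Coalgebra.comul (R := k) n = n ⊗ₜ[k] wv + (t : H) ⊗ₜ[k] n := by
    have h := hΔnr 1
    rw [Finset.sum_range_succ, Finset.sum_range_succ, Finset.sum_range_zero] at h
    norm_num at h
    exact h
  -- comul of n ^ 2 (note `comul_pow` is a simp lemma, so LHS is `comul n ^ 2`)
  have hn2 : (Coalgebra.comul (R := k) n) ^ 2 =
      (n ^ 2) ⊗ₜ[k] W + ((2 : k) * (q : k)) • (((t : H) * n) ⊗ₜ[k] En)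
        + (((t : H)) ^ 2) ⊗ₜ[k] (n ^ 2) := by
    have h := hΔnr 2
    rw [Finset.sum_range_succ, Finset.sum_range_succ, Finset.sum_range_succ,
      Finset.sum_range_zero] at h
    norm_num at h
    exact h
  -- the (★) equation
  have EqStar : (n ^ 2) ⊗ₜ[k] (wv * wv) + (n * (t : H)) ⊗ₜ[k] En
      + ((t : H) * n) ⊗ₜ[k] (n * wv) + (((t : H)) ^ 2) ⊗ₜ[k] (n ^ 2)
      = (n ^ 2) ⊗ₜ[k] W + ((2 : k) * (q : k)) • (((t : H) * n) ⊗ₜ[k] En)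
        + (((t : H)) ^ 2) ⊗ₜ[k] (n ^ 2) := by
    rw [← hn2, hn1, pow_two (n ⊗ₜ[k] wv + (t : H) ⊗ₜ[k] n), add_mul, mul_add, mul_add]
    simp only [Algebra.TensorProduct.tmul_mul_tmul]
    rw [← pow_two n, ← pow_two ((t : H)), hEn]
    abel
  -- apply coordinate projection on the first leg at (0,0,2)
  set κ : k := bH.coord (0, 0, 2) (n * (t : H)) with hκ
  have EqA : wv * wv + κ • En = W := by
    have hstar := congrArg (fun z : H ⊗[k] H =>
      (TensorProduct.lid k H) ((TensorProduct.map (bH.coord (0, 0, 2)) (LinearMap.id)) z)) EqStar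
    have c1 : bH.coord (0, 0, 2) (n ^ 2) = 1 := by rw [← hb002]; exact hco1 _
    have c2 : bH.coord (0, 0, 2) ((t : H) * n) = 0 := by
      rw [← hb011]; exact hco0 _ _ (by decide)
    have c3 : bH.coord (0, 0, 2) (((t : H)) ^ 2) = 0 := by
      rw [← hb020]; exact hco0 _ _ (by decide)
    simp only [map_add, map_smul, TensorProduct.map_tmul, LinearMap.id_apply,
      TensorProduct.lid_tmul, c1, c2, c3, ← hκ, one_smul, zero_smul, smul_zero,
      add_zero, zero_add] at hstar
    exact hstar
  have EqA' : wv * wv = W - κ • En := eq_sub_of_add_eq EqA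
  -- comul values
  have hgD1 : Coalgebra.comul (R := k) ((Dt : Hˣ) : H) = ((Dt : Hˣ) : H) ⊗ₜ[k] ((Dt : Hˣ) : H) := by
    have h := hgD 1; rw [zpow_one] at h; exact h
  have hgtinv : Coalgebra.comul (R := k) ((t⁻¹ : Hˣ) : H)
      = ((t⁻¹ : Hˣ) : H) ⊗ₜ[k] ((t⁻¹ : Hˣ) : H) := by
    have h := hgt (-1); rw [zpow_neg_one] at h; exact h
  have hgtinv2 : Coalgebra.comul (R := k) (((t ^ 2)⁻¹ : Hˣ) : H)
      = (((t ^ 2)⁻¹ : Hˣ) : H) ⊗ₜ[k] (((t ^ 2)⁻¹ : Hˣ) : H) := by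
    have h := hgt (-2)
    have h2 : (t : Hˣ) ^ (-2 : ℤ) = (t ^ 2)⁻¹ := by
      rw [zpow_neg]; norm_cast
    rw [h2] at h; exact h
  have hcw : Coalgebra.comul (R := k) wv = wv ⊗ₜ[k] wv := by
    rw [hwv, Bialgebra.comul_mul, hgD1, hgtinv, Algebra.TensorProduct.tmul_mul_tmul]
  have hcW : Coalgebra.comul (R := k) W = W ⊗ₜ[k] W := by
    rw [hW, Bialgebra.comul_mul, Bialgebra.comul_pow, hgD1, hgtinv2,
      Algebra.TensorProduct.tmul_pow, Algebra.TensorProduct.tmul_mul_tmul]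
  have hwt : wv * ((t : Hˣ) : H) = (Dt : H) := by
    rw [hwv, mul_assoc, Units.inv_mul, mul_one]
  have hcE : Coalgebra.comul (R := k) En
      = En ⊗ₜ[k] (wv * wv) + (Dt : H) ⊗ₜ[k] En := by
    rw [hEn, Bialgebra.comul_mul, hcw, hn1, mul_add]
    simp only [Algebra.TensorProduct.tmul_mul_tmul]
    rw [hwt]
  -- comul of EqA
  have EqB : (W - κ • En) ⊗ₜ[k] (W - κ • En)
      + κ • (En ⊗ₜ[k] (W - κ • En) + (Dt : H) ⊗ₜ[k] En) = W ⊗ₜ[k] W := by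
    have h := congrArg (⇑(Coalgebra.comul (R := k) (A := H))) EqA
    simp only [map_add, map_smul] at h
    rw [Bialgebra.comul_mul, hcw, Algebra.TensorProduct.tmul_mul_tmul, hcE, hcW, EqA'] at h
    exact h
  -- scalar projection at ((1,0,0),(1,-1,1))
  have hκ0 : κ = 0 := by
    have h := congrArg (fun z : H ⊗[k] H =>
      (LinearMap.mul' k k) ((TensorProduct.map (bH.coord (1, 0, 0)) (bH.coord (1, -1, 1))) z)) EqB
    have c1 : bH.coord (1, 0, 0) W = 0 := by rw [← hb2m20]; exact hco0 _ _ (by decide)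
    have c2 : bH.coord (1, 0, 0) En = 0 := by rw [← hb1m11]; exact hco0 _ _ (by decide)
    have c3 : bH.coord (1, 0, 0) ((Dt : Hˣ) : H) = 1 := by rw [← hb100]; exact hco1 _
    have c4 : bH.coord (1, -1, 1) En = 1 := by rw [← hb1m11]; exact hco1 _
    simp only [map_add, map_sub, map_smul, TensorProduct.map_tmul,
      LinearMap.mul'_apply, c1, c2, c3, c4, smul_eq_mul] at h
    -- h should now reduce to an equation implying κ = 0
    simpa using h
  rw [hκ0, zero_smul, add_zero] at EqA
  -- back to units
  have hu : (Dt * t⁻¹) * (Dt * t⁻¹) = Dt * (Dt * (t⁻¹ * t⁻¹)) := by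
    have hval : wv * wv = ((Dt * (Dt * (t⁻¹ * t⁻¹)) : Hˣ) : H) := by
      rw [EqA, hW]
      simp only [Units.val_mul, Units.val_pow_eq_pow_val, pow_two, mul_inv_rev]
      simp [mul_assoc]
    apply Units.ext
    simp only [Units.val_mul, ← hwv]
    simpa using hval
  have key : (t⁻¹ : Hˣ) * Dt = Dt * t⁻¹ := by
    have h1 : Dt * ((t⁻¹ * Dt) * t⁻¹) = Dt * ((Dt * t⁻¹) * t⁻¹) := by
      calc Dt * ((t⁻¹ * Dt) * t⁻¹) = (Dt * t⁻¹) * (Dt * t⁻¹) := by group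
        _ = Dt * (Dt * (t⁻¹ * t⁻¹)) := hu
        _ = Dt * ((Dt * t⁻¹) * t⁻¹) := by group
    exact mul_right_cancel (mul_left_cancel h1)
  calc (t : Hˣ) * Dt = t * (Dt * t⁻¹) * t := by group
    _ = t * (t⁻¹ * Dt) * t := by rw [key]
    _ = Dt * t := by group

end Phase1
section Phase2

open TensorProduct Coalgebra

variable {k H : Type*} [Field k] [Ring H] [Bialgebra k H]

lemma comul_basis (q : kˣ) (t Dt : Hˣ) (n : H)
    (bH : Module.Basis (ℤ × ℤ × ℕ) k H)
    (hbH : ∀ (p m : ℤ) (r : ℕ),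
      bH (p, m, r) = ((Dt ^ p : Hˣ) : H) * ((t ^ m : Hˣ) : H) * n ^ r)
    (hgt : ∀ m : ℤ, Coalgebra.comul (R := k) ((t ^ m : Hˣ) : H) =
      ((t ^ m : Hˣ) : H) ⊗ₜ[k] ((t ^ m : Hˣ) : H))
    (hgD : ∀ p : ℤ, Coalgebra.comul (R := k) ((Dt ^ p : Hˣ) : H) =
      ((Dt ^ p : Hˣ) : H) ⊗ₜ[k] ((Dt ^ p : Hˣ) : H))
    (hΔnr : ∀ r : ℕ, Coalgebra.comul (R := k) (n ^ r) =
      ∑ j ∈ Finset.range (r + 1),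
        ((r.choose j : k) * ((q ^ (j * (r - j)) : kˣ) : k)) •
          ((((t ^ j : Hˣ) : H) * n ^ (r - j)) ⊗ₜ[k]
            (((Dt ^ (r - j) : Hˣ) : H) * ((t ^ ((j : ℤ) - (r : ℤ)) : Hˣ) : H) * n ^ j)))
    (hTD : (t : Hˣ) * Dt = Dt * t) (p m : ℤ) (r : ℕ) :
    Coalgebra.comul (R := k) (bH (p, m, r)) =
      ∑ j ∈ Finset.range (r + 1),
        ((r.choose j : k) * ((q ^ (j * (r - j)) : kˣ) : k)) •
          (bH (p, m + (j : ℤ), r - j) ⊗ₜ[k]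
           bH (p + ((r - j : ℕ) : ℤ), m + ((j : ℤ) - (r : ℤ)), j)) := by
  have hC : Commute (t : Hˣ) Dt := hTD
  have hTzDz : ∀ (a b : ℤ), ((t ^ a : Hˣ) : H) * ((Dt ^ b : Hˣ) : H)
      = ((Dt ^ b : Hˣ) : H) * ((t ^ a : Hˣ) : H) := by
    intro a b
    have h := (hC.zpow_zpow a b).eq
    calc ((t ^ a : Hˣ) : H) * ((Dt ^ b : Hˣ) : H) = ((t ^ a * Dt ^ b : Hˣ) : H) := by
          rw [Units.val_mul]
      _ = ((Dt ^ b * t ^ a : Hˣ) : H) := by rw [h]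
      _ = _ := by rw [Units.val_mul]
  rw [hbH p m r, Bialgebra.comul_mul, Bialgebra.comul_mul, hgD, hgt, hΔnr,
    Algebra.TensorProduct.tmul_mul_tmul, Finset.mul_sum]
  refine Finset.sum_congr rfl ?_
  intro j hj
  rw [Finset.mem_range, Nat.lt_succ_iff] at hj
  rw [mul_smul_comm, Algebra.TensorProduct.tmul_mul_tmul]
  congr 1
  congr 1
  · -- first leg
    rw [hbH]
    calc ((Dt ^ p : Hˣ) : H) * ((t ^ m : Hˣ) : H) * (((t ^ j : Hˣ) : H) * n ^ (r - j))
        = ((Dt ^ p : Hˣ) : H) * (((t ^ m : Hˣ) : H) * ((t ^ (j : ℤ) : Hˣ) : H)) * n ^ (r - j) := by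
          rw [zpow_natCast]
          simp only [mul_assoc]
      _ = ((Dt ^ p : Hˣ) : H) * ((t ^ (m + (j : ℤ)) : Hˣ) : H) * n ^ (r - j) := by
          rw [← Units.val_mul, ← zpow_add]
  · -- second leg
    rw [hbH]
    calc ((Dt ^ p : Hˣ) : H) * ((t ^ m : Hˣ) : H) *
          (((Dt ^ (r - j) : Hˣ) : H) * ((t ^ ((j : ℤ) - (r : ℤ)) : Hˣ) : H) * n ^ j)
        = ((Dt ^ p : Hˣ) : H) * (((t ^ m : Hˣ) : H) * ((Dt ^ ((r - j : ℕ) : ℤ) : Hˣ) : H)) *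
            (((t ^ ((j : ℤ) - (r : ℤ)) : Hˣ) : H) * n ^ j) := by
          rw [zpow_natCast]
          simp only [mul_assoc]
      _ = ((Dt ^ p : Hˣ) : H) * (((Dt ^ ((r - j : ℕ) : ℤ) : Hˣ) : H) * ((t ^ m : Hˣ) : H)) *
            (((t ^ ((j : ℤ) - (r : ℤ)) : Hˣ) : H) * n ^ j) := by
          rw [hTzDz]
      _ = (((Dt ^ p : Hˣ) : H) * ((Dt ^ ((r - j : ℕ) : ℤ) : Hˣ) : H)) *
            ((((t ^ m : Hˣ) : H) * ((t ^ ((j : ℤ) - (r : ℤ)) : Hˣ) : H)) * n ^ j) := by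
          simp only [mul_assoc]
      _ = ((Dt ^ (p + ((r - j : ℕ) : ℤ)) : Hˣ) : H) *
            ((t ^ (m + ((j : ℤ) - (r : ℤ))) : Hˣ) : H) * n ^ j := by
          rw [← Units.val_mul, ← zpow_add, ← Units.val_mul, ← zpow_add]
          simp only [mul_assoc]

end Phase2
lemma cast_jj (j : ℕ) : ((j * (j - 1) : ℕ) : ℤ) = (j : ℤ) * ((j : ℤ) - 1) := by
  cases j with
  | zero => simp
  | succ i => push_cast [Nat.succ_sub_one]; ring

lemma neg_one_cancel {k : Type*} [Field k] (p s : ℤ) :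
    (-1 : k) ^ p * (-1 : k) ^ (p + s) = (-1 : k) ^ s := by
  have hm1 : (-1 : k) ≠ 0 := by norm_num
  rw [← zpow_add₀ hm1, show p + (p + s) = 2 * p + s by ring, zpow_add₀ hm1, zpow_mul]
  norm_num

lemma collect1 {k : Type*} [Field k] (c u v Q : k) (hQ : Q ≠ 0) (a p' B C D E : ℤ)
    (hE : E = a + p' + B + C + D) :
    c * Q ^ a * (u * Q ^ p') * ((v * Q ^ B) * Q ^ C) * Q ^ D = c * ((u * v) * Q ^ E) := by
  subst hE
  rw [zpow_add₀ hQ, zpow_add₀ hQ, zpow_add₀ hQ, zpow_add₀ hQ]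
  ring

lemma collect2 {k : Type*} [Field k] (c u v Q : k) (hQ : Q ≠ 0) (a B C P D E : ℤ)
    (hE : E = a + B + C + P + D) :
    c * Q ^ a * ((u * Q ^ B) * Q ^ C) * (v * Q ^ P) * Q ^ D = c * ((u * v) * Q ^ E) := by
  subst hE
  rw [zpow_add₀ hQ, zpow_add₀ hQ, zpow_add₀ hQ, zpow_add₀ hQ]
  ring

section Phase3

variable {k A : Type*} [Field k] [Ring A] [Algebra k A]
variable (q : kˣ) (d : A) (cu Du : Aˣ)

lemma term1
    (hcd : (cu : A) * d = ((q⁻¹ : kˣ) : k) • (d * (cu : A)))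
    (hcD : (cu : A) * (Du : A) = (((q ^ 2)⁻¹ : kˣ) : k) • ((Du : A) * (cu : A)))
    (hdD : d * (Du : A) = (Du : A) * d)
    (p m : ℤ) (r j : ℕ) (hj : j ≤ r) :
    ((r.choose j : k) * ((q ^ (j * (r - j)) : kˣ) : k)) •
      (((((-q) ^ p : kˣ) : k) • (((Du ^ p : Aˣ) : A) * ((cu ^ (m + (j : ℤ)) : Aˣ) : A) * d ^ (r - j))) *
       ((((-1 : kˣ) ^ (p + ((r - j : ℕ) : ℤ)) *
            q ^ (-(p + ((r - j : ℕ) : ℤ)) + ((j * (j - 1) : ℕ) : ℤ)) : kˣ) : k) •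
         (d ^ j * ((cu ^ (-(m + ((j : ℤ) - (r : ℤ)))) : Aˣ) : A) *
           ((Du ^ (-(j : ℤ) - (p + ((r - j : ℕ) : ℤ))) : Aˣ) : A))))
    = ((r.choose j : k) * ((-1 : k) ^ (r - j) *
        ((q ^ (3 * (r : ℤ) * (r : ℤ) - (r : ℤ) - (r : ℤ) * m + 2 * (r : ℤ) * p) : kˣ) : k))) •
        NF (d := d) (cu := cu) (Du := Du) (-(r : ℤ)) ((r : ℤ)) r := by
  rw [NF_of_rev q d cu Du hcd hcD hdD
      (-(j : ℤ) - (p + ((r - j : ℕ) : ℤ))) (-(m + ((j : ℤ) - (r : ℤ)))) j]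
  rw [show (((Du ^ p : Aˣ) : A) * ((cu ^ (m + (j : ℤ)) : Aˣ) : A) * d ^ (r - j) : A)
      = NF (d := d) (cu := cu) (Du := Du) p (m + (j : ℤ)) (r - j) from rfl]
  rw [smul_smul, smul_mul_assoc, mul_smul_comm, smul_smul,
    NF_mul q d cu Du hcd hcD hdD p (m + (j : ℤ)) (-(j : ℤ) - (p + ((r - j : ℕ) : ℤ)))
      (-(m + ((j : ℤ) - (r : ℤ)))) (r - j) j, smul_smul]
  rw [show p + (-(j : ℤ) - (p + ((r - j : ℕ) : ℤ))) = -(r : ℤ) by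
    push_cast [Nat.cast_sub hj]; ring]
  rw [show (m + (j : ℤ)) + (-(m + ((j : ℤ) - (r : ℤ)))) = (r : ℤ) by ring]
  rw [show (r - j) + j = r from Nat.sub_add_cancel hj]
  simp only [smul_smul]
  congr 1
  have hq : (q : k) ≠ 0 := Units.ne_zero q
  have hs : ((r - j : ℕ) : ℤ) = (r : ℤ) - (j : ℤ) := Nat.cast_sub hj
  simp only [Units.val_mul, Units.val_zpow_eq_zpow_val, Units.val_pow_eq_pow_val,
    Units.val_neg, Units.val_one]
  rw [show (-((q : k))) ^ p = (-1 : k) ^ p * (q : k) ^ p from by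
    rw [← neg_one_mul ((q : k)), mul_zpow]]
  rw [← zpow_natCast ((q : k)) (j * (r - j)), ← zpow_natCast (-1 : k) (r - j)]
  rw [← neg_one_cancel (k := k) p (((r - j : ℕ) : ℤ))]
  exact collect1 _ _ _ _ hq _ _ _ _ _ _ (by rw [cast_jj]; push_cast [hs]; ring)

lemma term2
    (hcd : (cu : A) * d = ((q⁻¹ : kˣ) : k) • (d * (cu : A)))
    (hcD : (cu : A) * (Du : A) = (((q ^ 2)⁻¹ : kˣ) : k) • ((Du : A) * (cu : A)))
    (hdD : d * (Du : A) = (Du : A) * d)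
    (p m : ℤ) (r j : ℕ) (hj : j ≤ r) :
    ((r.choose j : k) * ((q ^ (j * (r - j)) : kˣ) : k)) •
      (((((-1 : kˣ) ^ p * q ^ (-p + (((r - j) * ((r - j) - 1) : ℕ) : ℤ)) : kˣ) : k) •
         (d ^ (r - j) * ((cu ^ (-(m + (j : ℤ))) : Aˣ) : A) *
           ((Du ^ (-((r - j : ℕ) : ℤ) - p) : Aˣ) : A))) *
       ((((-q) ^ (p + ((r - j : ℕ) : ℤ)) : kˣ) : k) •
         (((Du ^ (p + ((r - j : ℕ) : ℤ)) : Aˣ) : A) *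
          ((cu ^ (m + ((j : ℤ) - (r : ℤ))) : Aˣ) : A) * d ^ j)))
    = ((r.choose j : k) * (-1 : k) ^ (r - j)) •
        NF (d := d) (cu := cu) (Du := Du) 0 (-(r : ℤ)) r := by
  rw [NF_of_rev q d cu Du hcd hcD hdD (-((r - j : ℕ) : ℤ) - p) (-(m + (j : ℤ))) (r - j)]
  rw [show (((Du ^ (p + ((r - j : ℕ) : ℤ)) : Aˣ) : A) *
      ((cu ^ (m + ((j : ℤ) - (r : ℤ))) : Aˣ) : A) * d ^ j : A)
      = NF (d := d) (cu := cu) (Du := Du) (p + ((r - j : ℕ) : ℤ)) (m + ((j : ℤ) - (r : ℤ))) j from rfl]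
  rw [smul_smul, smul_mul_assoc, mul_smul_comm, smul_smul,
    NF_mul q d cu Du hcd hcD hdD (-((r - j : ℕ) : ℤ) - p) (-(m + (j : ℤ)))
      (p + ((r - j : ℕ) : ℤ)) (m + ((j : ℤ) - (r : ℤ))) (r - j) j, smul_smul]
  rw [show (-((r - j : ℕ) : ℤ) - p) + (p + ((r - j : ℕ) : ℤ)) = 0 by ring]
  rw [show (-(m + (j : ℤ))) + (m + ((j : ℤ) - (r : ℤ))) = -(r : ℤ) by ring]
  rw [show (r - j) + j = r from Nat.sub_add_cancel hj]
  simp only [smul_smul]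
  congr 1
  have hq : (q : k) ≠ 0 := Units.ne_zero q
  have hs : ((r - j : ℕ) : ℤ) = (r : ℤ) - (j : ℤ) := Nat.cast_sub hj
  simp only [Units.val_mul, Units.val_zpow_eq_zpow_val, Units.val_pow_eq_pow_val,
    Units.val_neg, Units.val_one]
  rw [show (-((q : k))) ^ (p + ((r - j : ℕ) : ℤ))
      = (-1 : k) ^ (p + ((r - j : ℕ) : ℤ)) * (q : k) ^ (p + ((r - j : ℕ) : ℤ)) from by
    rw [← neg_one_mul ((q : k)), mul_zpow]]
  rw [← zpow_natCast ((q : k)) (j * (r - j)), ← zpow_natCast (-1 : k) (r - j)]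
  rw [show ((r.choose j : k) * (-1 : k) ^ ((r - j : ℕ) : ℤ))
      = (r.choose j : k) * ((-1 : k) ^ ((r - j : ℕ) : ℤ) * (q : k) ^ (0 : ℤ)) from by
    rw [zpow_zero, mul_one]]
  rw [← neg_one_cancel (k := k) p (((r - j : ℕ) : ℤ))]
  exact collect2 _ _ _ _ hq _ _ _ _ _ _ (by rw [cast_jj ((r - j : ℕ))]; push_cast [hs]; ring)

end Phase3
lemma alt_sum {k : Type*} [Field k] (r : ℕ) :
    ∑ j ∈ Finset.range (r + 1), ((r.choose j : k) * (-1 : k) ^ (r - j))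
      = if r = 0 then 1 else 0 := by
  have hInt := Int.alternating_sum_range_choose (n := r)
  have h2 : ∑ j ∈ Finset.range (r + 1), ((r.choose j : k) * (-1 : k) ^ (r - j))
      = (-1 : k) ^ r * ∑ j ∈ Finset.range (r + 1), ((-1 : k) ^ j * (r.choose j : k)) := by
    rw [Finset.mul_sum]
    refine Finset.sum_congr rfl ?_
    intro j hj
    rw [Finset.mem_range, Nat.lt_succ_iff] at hj
    have h4 : ((-1 : k) ^ j) * ((-1 : k) ^ j) = 1 := by
      rw [← mul_pow]; norm_num
    have h3 : (-1 : k) ^ (r - j) * (-1 : k) ^ j = (-1 : k) ^ r := by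
      rw [← pow_add, Nat.sub_add_cancel hj]
    calc (r.choose j : k) * (-1 : k) ^ (r - j)
        = (r.choose j : k) * ((-1 : k) ^ (r - j) * ((-1 : k) ^ j * (-1 : k) ^ j)) := by
          rw [h4, mul_one]
      _ = ((-1 : k) ^ (r - j) * (-1 : k) ^ j) * ((-1 : k) ^ j * (r.choose j : k)) := by ring
      _ = (-1 : k) ^ r * ((-1 : k) ^ j * (r.choose j : k)) := by rw [h3]
  rw [h2]
  have h5 : ∑ j ∈ Finset.range (r + 1), ((-1 : k) ^ j * (r.choose j : k))
      = ((if r = 0 then 1 else 0 : ℤ) : k) := by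
    rw [← hInt]
    push_cast
    rfl
  rw [h5]
  rcases Nat.eq_zero_or_pos r with h | h
  · subst h; norm_num
  · rw [if_neg h.ne', if_neg h.ne']
    push_cast
    ring

/-- The map `γ₂ : H → A₂`, `γ₂(D̃^p t^m n^r) = (-1)^p q^p D^p c^m d^r`, is convolution
invertible with convolution inverse `γ̄₂(D̃^p t^m n^r) = (-1)^p q^{-p + r(r-1)} d^r c^{-m} D^{-r-p}`. -/
theorem gammaTwo_convolution_invertible (q : kˣ)
    (d : A) (cu Du : Aˣ) (t Dt : Hˣ) (n : H)
    (bH : Module.Basis (ℤ × ℤ × ℕ) k H)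
    (hbH : ∀ (p m : ℤ) (r : ℕ),
      bH (p, m, r) = ((Dt ^ p : Hˣ) : H) * ((t ^ m : Hˣ) : H) * n ^ r)
    (hgt : ∀ m : ℤ, Coalgebra.comul (R := k) ((t ^ m : Hˣ) : H) =
      ((t ^ m : Hˣ) : H) ⊗ₜ[k] ((t ^ m : Hˣ) : H))
    (hgD : ∀ p : ℤ, Coalgebra.comul (R := k) ((Dt ^ p : Hˣ) : H) =
      ((Dt ^ p : Hˣ) : H) ⊗ₜ[k] ((Dt ^ p : Hˣ) : H))
    (hΔnr : ∀ r : ℕ, Coalgebra.comul (R := k) (n ^ r) =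
      ∑ j ∈ Finset.range (r + 1),
        ((r.choose j : k) * ((q ^ (j * (r - j)) : kˣ) : k)) •
          ((((t ^ j : Hˣ) : H) * n ^ (r - j)) ⊗ₜ[k]
            (((Dt ^ (r - j) : Hˣ) : H) * ((t ^ ((j : ℤ) - (r : ℤ)) : Hˣ) : H) * n ^ j)))
    (hεt : ∀ m : ℤ, Coalgebra.counit (R := k) ((t ^ m : Hˣ) : H) = 1)
    (hεD : ∀ p : ℤ, Coalgebra.counit (R := k) ((Dt ^ p : Hˣ) : H) = 1)
    (hεn : Coalgebra.counit (R := k) n = 0)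
    -- commutation relations in `A₂`
    (hcd : (cu : A) * d = ((q⁻¹ : kˣ) : k) • (d * (cu : A)))
    (hcD : (cu : A) * (Du : A) = (((q ^ 2)⁻¹ : kˣ) : k) • ((Du : A) * (cu : A)))
    (hdD : d * (Du : A) = (Du : A) * d) :
    conv (gammaTwo q d cu Du bH) (gammaTwoBar q d cu Du bH) =
      (Algebra.linearMap k A) ∘ₗ (Coalgebra.counit (R := k) (A := H)) ∧
    conv (gammaTwoBar q d cu Du bH) (gammaTwo q d cu Du bH) =
      (Algebra.linearMap k A) ∘ₗ (Coalgebra.counit (R := k) (A := H)) := by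
  have hTD : (t : Hˣ) * Dt = Dt * t := t_Dt_comm q t Dt n bH hbH hgt hgD hΔnr
  have hcb := comul_basis q t Dt n bH hbH hgt hgD hΔnr hTD
  have hcount : ∀ (p m : ℤ) (r : ℕ),
      Coalgebra.counit (R := k) (bH (p, m, r)) = (if r = 0 then 1 else 0 : k) := by
    intro p m r
    rw [hbH, Bialgebra.counit_mul, Bialgebra.counit_mul, hεD, hεt, Bialgebra.counit_pow, hεn]
    rcases r with _ | r
    · norm_num
    · norm_num
  constructor
  · apply bH.ext
    rintro ⟨p, m, r⟩
    simp only [conv, LinearMap.coe_comp, Function.comp_apply]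
    rw [hcb p m r]
    simp only [map_sum, map_smul, TensorProduct.map_tmul, LinearMap.mul'_apply,
      gammaTwo, gammaTwoBar, Module.Basis.constr_basis]
    rw [Finset.sum_congr rfl (fun j hj => term1 q d cu Du hcd hcD hdD p m r j
      (by rw [Finset.mem_range, Nat.lt_succ_iff] at hj; exact hj))]
    rw [← Finset.sum_smul]
    simp only [← mul_assoc]
    rw [← Finset.sum_mul, alt_sum]
    rw [hcount p m r, Algebra.linearMap_apply]
    rcases r with _ | r
    · norm_num [NF]
    · norm_num
  · apply bH.ext
    rintro ⟨p, m, r⟩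
    simp only [conv, LinearMap.coe_comp, Function.comp_apply]
    rw [hcb p m r]
    simp only [map_sum, map_smul, TensorProduct.map_tmul, LinearMap.mul'_apply,
      gammaTwo, gammaTwoBar, Module.Basis.constr_basis]
    rw [Finset.sum_congr rfl (fun j hj => term2 q d cu Du hcd hcD hdD p m r j
      (by rw [Finset.mem_range, Nat.lt_succ_iff] at hj; exact hj))]
    rw [← Finset.sum_smul, alt_sum]
    rw [hcount p m r, Algebra.linearMap_apply]
    rcases r with _ | r
    · norm_num [NF]
    · norm_num
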